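/- For every u in the Schwartz class on ℝ³, ‖u‖_{L^∞(ℝ³)} ≤ C ‖u‖_{Ḣ¹(ℝ³)}^{1/2} ‖u‖_{Ḣ²(ℝ³)}^{1/2} for a universal constant C. -/

import Mathlib

open MeasureTheory Real FourierTransform Set Metric
open scoped ENNReal NNReal

noncomputable section AgmonAux

abbrev AgmonE3 : Type := EuclideanSpace ℝ (Fin 3)

lemma agmon_dim_E3 : Module.finrank ℝ (EuclideanSpace ℝ (Fin 3)) = 3 := by
  simp [finrank_euclideanSpace_fin]

lemma agmon_lintegral_fun_norm_E3 (f : ℝ → ℝ≥0∞) (hf : Measurable f) :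
    ∫⁻ x : AgmonE3, f ‖x‖ = (3 * volume (ball (0:AgmonE3) 1)) *
      ∫⁻ r in Ioi (0:ℝ), ENNReal.ofReal (r^2) * f r := by
  have h1 : ∫⁻ x : AgmonE3, f ‖x‖
      = ∫⁻ x : ({(0:AgmonE3)}ᶜ : Set AgmonE3), f ‖x.1‖ ∂(volume.comap Subtype.val) := by
    rw [lintegral_subtype_comap (measurableSet_singleton _).compl fun x : AgmonE3 ↦ f ‖x‖,
      restrict_compl_singleton]
  rw [h1]
  have h2 := (Measure.measurePreserving_homeomorphUnitSphereProd
      (volume : Measure AgmonE3)).lintegral_comp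
      (f := fun p : sphere (0:AgmonE3) 1 × Ioi (0:ℝ) => f p.2.1)
      (by exact (hf.comp (measurable_subtype_coe.comp measurable_snd)))
  have h3 : ∀ x : ({(0:AgmonE3)}ᶜ : Set AgmonE3),
      f ‖x.1‖ = f (((homeomorphUnitSphereProd AgmonE3 x).2 : ℝ)) := by
    intro x; simp
  calc ∫⁻ x : ({(0:AgmonE3)}ᶜ : Set AgmonE3), f ‖x.1‖ ∂(volume.comap Subtype.val)
      = ∫⁻ x : ({(0:AgmonE3)}ᶜ : Set AgmonE3),
          f (((homeomorphUnitSphereProd AgmonE3 x).2 : ℝ)) ∂(volume.comap Subtype.val) := by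
        exact lintegral_congr h3
    _ = ∫⁻ p : sphere (0:AgmonE3) 1 × Ioi (0:ℝ), f p.2.1
          ∂((volume : Measure AgmonE3).toSphere.prod
            (.volumeIoiPow (Module.finrank ℝ AgmonE3 - 1))) := h2
    _ = (3 * volume (ball (0:AgmonE3) 1)) * ∫⁻ r in Ioi (0:ℝ), ENNReal.ofReal (r^2) * f r := by
        rw [lintegral_prod _ (by exact (hf.comp
          (measurable_subtype_coe.comp measurable_snd)).aemeasurable)]
        simp only [lintegral_const]
        have hρ : ∫⁻ y : Ioi (0:ℝ), f y ∂(Measure.volumeIoiPow 2)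
            = ∫⁻ r in Ioi (0:ℝ), ENNReal.ofReal (r^2) * f r := by
          rw [Measure.volumeIoiPow]
          rw [lintegral_withDensity_eq_lintegral_mul _ (by fun_prop) (by fun_prop)]
          have : ∫⁻ (a : ↑(Ioi (0:ℝ))), ((fun r : Ioi (0:ℝ) => ENNReal.ofReal ((r:ℝ) ^ 2))
                * fun y : Ioi (0:ℝ) => f ↑y) a ∂(Measure.comap Subtype.val volume)
              = ∫⁻ (a : ↑(Ioi (0:ℝ))), (fun r : ℝ => ENNReal.ofReal (r ^ 2) * f r) ↑a
                ∂(Measure.comap Subtype.val volume) := rfl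
          rw [this]
          exact lintegral_subtype_comap measurableSet_Ioi
            (fun r => ENNReal.ofReal (r ^ 2) * f r)
        have hdim : Module.finrank ℝ (EuclideanSpace ℝ (Fin 3)) - 1 = 2 := by
          rw [agmon_dim_E3]
        rw [hdim, hρ, Measure.toSphere_apply_univ, agmon_dim_E3]
        push_cast
        ring

lemma agmon_key_eq {a b : ℝ} (ha : 0 < a) (hb : 0 < b) (r : ℝ) :
    (a + b*r^2)⁻¹ = a⁻¹ * (1 + (Real.sqrt (b/a) * r)^2)⁻¹ := by
  rw [mul_pow, Real.sq_sqrt (by positivity)]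
  rw [← mul_inv]
  congr 1
  field_simp

lemma agmon_sqrt_rel {a b : ℝ} (ha : 0 < a) (hb : 0 < b) :
    a * Real.sqrt (b/a) = Real.sqrt (a*b) := by
  rw [show a * b = a^2 * (b/a) by field_simp, Real.sqrt_mul (by positivity),
    Real.sqrt_sq ha.le]

lemma agmon_oneD_integrable {a b : ℝ} (ha : 0 < a) (hb : 0 < b) :
    IntegrableOn (fun r : ℝ => (a + b*r^2)⁻¹) (Ioi 0) := by
  have hc : 0 < Real.sqrt (b/a) := Real.sqrt_pos.2 (by positivity)
  have h1 : IntegrableOn (fun r : ℝ => (1 + (Real.sqrt (b/a) * r)^2)⁻¹) (Ioi 0) := by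
    have := (integrableOn_Ioi_comp_mul_left_iff
      (fun s : ℝ => (1 + s^2)⁻¹) 0 hc).2 (by
        simpa using integrable_inv_one_add_sq.integrableOn)
    simpa using this
  have := h1.const_mul a⁻¹
  rw [IntegrableOn]
  simpa only [← agmon_key_eq ha hb] using this

lemma agmon_oneD_value {a b : ℝ} (ha : 0 < a) (hb : 0 < b) :
    ∫ r in Ioi (0:ℝ), (a + b*r^2)⁻¹ = π/2 * (Real.sqrt (a*b))⁻¹ := by
  have hc : 0 < Real.sqrt (b/a) := Real.sqrt_pos.2 (by positivity)
  simp_rw [agmon_key_eq ha hb]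
  rw [integral_const_mul]
  rw [integral_comp_mul_left_Ioi (fun s : ℝ => (1 + s^2)⁻¹) 0 hc]
  rw [mul_zero, integral_Ioi_inv_one_add_sq, Real.arctan_zero, sub_zero]
  rw [smul_eq_mul, ← agmon_sqrt_rel ha hb]
  field_simp

lemma agmon_lintegral_weight {a b : ℝ} (ha : 0 < a) (hb : 0 < b) :
    ∫⁻ ξ : AgmonE3, ENNReal.ofReal ((a*‖ξ‖^2 + b*‖ξ‖^4)⁻¹)
      = ENNReal.ofReal ((3 * (volume (ball (0:AgmonE3) 1)).toReal) * (π/2)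
          * (Real.sqrt (a*b))⁻¹) := by
  have hf : Measurable (fun r : ℝ => ENNReal.ofReal ((a*r^2 + b*r^4)⁻¹)) := by fun_prop
  rw [agmon_lintegral_fun_norm_E3 _ hf]
  have hinner : ∫⁻ r in Ioi (0:ℝ), ENNReal.ofReal (r^2) * ENNReal.ofReal ((a*r^2 + b*r^4)⁻¹)
      = ∫⁻ r in Ioi (0:ℝ), ENNReal.ofReal ((a + b*r^2)⁻¹) := by
    refine setLIntegral_congr_fun measurableSet_Ioi (fun r hr => ?_)
    rw [← ENNReal.ofReal_mul (by positivity)]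
    congr 1
    have hr' : (0:ℝ) < r := hr
    have : a*r^2 + b*r^4 = r^2 * (a + b*r^2) := by ring
    rw [this, mul_inv, ← mul_assoc, mul_inv_cancel₀ (by positivity), one_mul]
  rw [hinner, ← ofReal_integral_eq_lintegral_ofReal (agmon_oneD_integrable ha hb)
    (Filter.Eventually.of_forall fun r => by positivity)]
  rw [agmon_oneD_value ha hb]
  have hball : (3 : ℝ≥0∞) * volume (ball (0:AgmonE3) 1)
      = ENNReal.ofReal (3 * (volume (ball (0:AgmonE3) 1)).toReal) := by
    rw [ENNReal.ofReal_mul (by norm_num), ENNReal.ofReal_toReal measure_ball_lt_top.ne]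
    norm_num
  rw [hball, ← ENNReal.ofReal_mul (by positivity)]
  congr 1
  ring

noncomputable def agmonUC (u : SchwartzMap AgmonE3 ℝ) : SchwartzMap AgmonE3 ℂ :=
  SchwartzMap.bilinLeftCLM (ContinuousLinearMap.lsmul ℝ ℝ : ℝ →L[ℝ] ℂ →L[ℝ] ℂ)
    (Function.HasTemperateGrowth.const (1:ℂ)) u

lemma agmonUC_apply (u : SchwartzMap AgmonE3 ℝ) :
    ⇑(agmonUC u) = fun y => ((u y : ℝ) : ℂ) := by
  funext y
  show (ContinuousLinearMap.lsmul ℝ ℝ (u y)) (1:ℂ) = _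
  simp [Complex.real_smul]

lemma agmon_pointwise_bound (u : SchwartzMap AgmonE3 ℝ) (x : AgmonE3) :
    |u x| ≤ ∫ ξ : AgmonE3, ‖𝓕 (fun y => ((u y : ℝ) : ℂ)) ξ‖ := by
  rw [← agmonUC_apply]
  set v := agmonUC u with hv
  have hF : 𝓕 ⇑v = ⇑(SchwartzMap.fourierTransformCLM ℝ v) := rfl
  have hinv : 𝓕⁻ (𝓕 ⇑v) = ⇑v :=
    v.continuous.fourierInv_fourier_eq v.integrable
      (by rw [hF]; exact (SchwartzMap.fourierTransformCLM ℝ v).integrable)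
  have hx : |u x| = ‖v x‖ := by
    rw [hv, agmonUC_apply]; simp [Complex.norm_real]
  have hx2 : ‖v x‖ = ‖𝓕⁻ (𝓕 ⇑v) x‖ := by rw [hinv]
  rw [hx, hx2, Real.fourierInv_eq]
  refine (norm_integral_le_integral_norm _).trans_eq ?_
  congr 1; funext ξ; rw [Circle.norm_smul]

lemma agmon_integrable_A (φ : SchwartzMap AgmonE3 ℂ) (k : ℕ) :
    Integrable (fun ξ : AgmonE3 => ‖ξ‖^k * ‖φ ξ‖^2) := by
  have hM := fun ξ => SchwartzMap.norm_le_seminorm ℝ φ ξ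
  set M := (SchwartzMap.seminorm ℝ 0 0) φ with hMdef
  have h := (φ.integrable_pow_mul volume k).const_mul M
  refine h.mono' ?_ (Filter.Eventually.of_forall fun ξ => ?_)
  · exact (((continuous_norm.pow k).mul ((φ.continuous.norm).pow 2)).aestronglyMeasurable)
  · have h1 : 0 ≤ ‖ξ‖^k := by positivity
    have hle : ‖ξ‖^k * ‖φ ξ‖^2 ≤ M * (‖ξ‖^k * ‖φ ξ‖) := by
      rw [pow_two, ← mul_assoc]
      calc ‖ξ‖^k * ‖φ ξ‖ * ‖φ ξ‖ ≤ ‖ξ‖^k * ‖φ ξ‖ * M := by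
            refine mul_le_mul_of_nonneg_left (hM ξ) (by positivity)
        _ = M * (‖ξ‖^k * ‖φ ξ‖) := by ring
    have h2 : 0 ≤ ‖ξ‖^k * ‖φ ξ‖^2 := by positivity
    rw [Real.norm_of_nonneg h2]
    exact hle

lemma agmon_alg_lemma {K A B : ℝ} (hK : 0 ≤ K) (hA : 0 < A) (hB : 0 < B) :
    (K * (Real.sqrt (B*A))⁻¹) ^ ((1:ℝ)/2) * (2*(A*B)) ^ ((1:ℝ)/2)
      = Real.sqrt (2*K) * (A^((1:ℝ)/4) * B^((1:ℝ)/4)) := by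
  have hAB : (0:ℝ) < A*B := mul_pos hA hB
  have h1 : Real.sqrt (B*A) = (A*B) ^ ((1:ℝ)/2) := by
    rw [mul_comm B A, Real.sqrt_eq_rpow]
  have h2 : ((A*B) ^ ((1:ℝ)/2))⁻¹ = (A*B) ^ (-((1:ℝ)/2)) := by
    rw [← Real.rpow_neg hAB.le]
  rw [h1, h2]
  rw [Real.mul_rpow hK (by positivity), Real.mul_rpow (by norm_num) hAB.le]
  have h3 : ((A*B) ^ (-((1:ℝ)/2))) ^ ((1:ℝ)/2) = (A*B) ^ (-((1:ℝ)/4)) := by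
    rw [← Real.rpow_mul hAB.le]; norm_num
  have h4 : ((A*B) ^ (-((1:ℝ)/4))) * ((A*B) ^ ((1:ℝ)/2)) = (A*B) ^ ((1:ℝ)/4) := by
    rw [← Real.rpow_add hAB]; norm_num
  have h5 : (A*B) ^ ((1:ℝ)/4) = A^((1:ℝ)/4) * B^((1:ℝ)/4) := Real.mul_rpow hA.le hB.le
  have h6 : K ^ ((1:ℝ)/2) * 2 ^ ((1:ℝ)/2) = Real.sqrt (2*K) := by
    rw [← Real.mul_rpow hK (by norm_num), Real.sqrt_eq_rpow, mul_comm K 2]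
  calc K ^ ((1:ℝ)/2) * ((A*B) ^ (-((1:ℝ)/2))) ^ ((1:ℝ)/2) * (2 ^ ((1:ℝ)/2) * (A*B) ^ ((1:ℝ)/2))
      = (K ^ ((1:ℝ)/2) * 2 ^ ((1:ℝ)/2)) * ((A*B) ^ (-((1:ℝ)/4)) * (A*B) ^ ((1:ℝ)/2)) := by
        rw [h3]; ring
    _ = Real.sqrt (2*K) * (A^((1:ℝ)/4) * B^((1:ℝ)/4)) := by rw [h4, h5, h6]

lemma agmon_key_CS (φ : SchwartzMap AgmonE3 ℂ)
    (hApos : 0 < ∫ ξ : AgmonE3, ‖ξ‖^2 * ‖φ ξ‖^2)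
    (hBpos : 0 < ∫ ξ : AgmonE3, ‖ξ‖^4 * ‖φ ξ‖^2) :
    ∫ ξ : AgmonE3, ‖φ ξ‖ ≤ Real.sqrt (2 * ((3 * (volume (ball (0:AgmonE3) 1)).toReal) * (π/2)))
      * ((∫ ξ : AgmonE3, ‖ξ‖^2 * ‖φ ξ‖^2)^((1:ℝ)/4)
        * (∫ ξ : AgmonE3, ‖ξ‖^4 * ‖φ ξ‖^2)^((1:ℝ)/4)) := by
  set A := ∫ ξ : AgmonE3, ‖ξ‖^2 * ‖φ ξ‖^2 with hA
  set B := ∫ ξ : AgmonE3, ‖ξ‖^4 * ‖φ ξ‖^2 with hB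
  set V := (volume (ball (0:AgmonE3) 1)).toReal with hV
  set K := (3 * V) * (π/2) with hK
  have hVnn : 0 ≤ V := ENNReal.toReal_nonneg
  clear_value A B V
  have hKnn : 0 ≤ K := by positivity
  set n : AgmonE3 → ℝ≥0∞ := fun ξ => (‖φ ξ‖₊ : ℝ≥0∞) with hn
  set S : AgmonE3 → ℝ := fun ξ => B*‖ξ‖^2 + A*‖ξ‖^4 with hS
  set F : AgmonE3 → ℝ≥0∞ := fun ξ => ENNReal.ofReal ((S ξ)⁻¹) with hF
  set G : AgmonE3 → ℝ≥0∞ := fun ξ => ENNReal.ofReal (S ξ) * (n ξ)^2 with hG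
  have hmeasφ : Measurable fun ξ : AgmonE3 => (‖φ ξ‖₊ : ℝ≥0∞) :=
    φ.continuous.measurable.nnnorm.coe_nnreal_ennreal
  have hFmeas : Measurable F := by
    apply Measurable.ennreal_ofReal
    fun_prop
  have hGmeas : Measurable G := by
    show Measurable ((fun ξ => ENNReal.ofReal (S ξ)) * (fun ξ => n ξ ^ 2))
    apply Measurable.mul
    · apply Measurable.ennreal_ofReal; fun_prop
    · exact hmeasφ.pow_const 2
  have hzero : (volume : Measure AgmonE3) {0} = 0 := measure_singleton 0
  have hane : ∀ᵐ ξ : AgmonE3, ξ ≠ 0 := by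
    rw [MeasureTheory.ae_iff]
    simpa using hzero
  have haeq : ∀ᵐ ξ : AgmonE3, F ξ ^ ((1:ℝ)/2) * G ξ ^ ((1:ℝ)/2) = n ξ := by
    filter_upwards [hane] with ξ hξ
    have hSpos : 0 < S ξ := by
      have : 0 < ‖ξ‖ := norm_pos_iff.2 hξ
      show 0 < B*‖ξ‖^2 + A*‖ξ‖^4
      positivity
    rw [← ENNReal.mul_rpow_of_nonneg _ _ (by norm_num : (0:ℝ) ≤ 1/2)]
    have : F ξ * G ξ = (n ξ)^2 := by
      rw [hF, hG]
      rw [← mul_assoc, ← ENNReal.ofReal_mul (by positivity), inv_mul_cancel₀ hSpos.ne']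
      simp
    rw [this, ← ENNReal.rpow_natCast (n ξ) 2, ← ENNReal.rpow_mul]
    norm_num
  have hCS : ∫⁻ ξ : AgmonE3, n ξ
      ≤ (∫⁻ ξ : AgmonE3, F ξ) ^ ((1:ℝ)/2) * (∫⁻ ξ : AgmonE3, G ξ) ^ ((1:ℝ)/2) := by
    rw [← lintegral_congr_ae haeq]
    exact ENNReal.lintegral_mul_norm_pow_le hFmeas.aemeasurable hGmeas.aemeasurable
      (by norm_num) (by norm_num) (by norm_num)
  have hofA : ENNReal.ofReal A = ∫⁻ ξ : AgmonE3, ENNReal.ofReal (‖ξ‖^2) * (n ξ)^2 := by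
    rw [hA, ofReal_integral_eq_lintegral_ofReal (agmon_integrable_A φ 2)
      (Filter.Eventually.of_forall fun ξ => by positivity)]
    refine lintegral_congr fun ξ => ?_
    rw [ENNReal.ofReal_mul (by positivity), hn]
    congr 1
    show ENNReal.ofReal (‖φ ξ‖^2) = ((‖φ ξ‖₊ : ℝ≥0∞))^2
    rw [ENNReal.ofReal_pow (norm_nonneg _)]; exact congrArg (· ^ 2) (ENNReal.ofReal_eq_coe_nnreal (norm_nonneg _))
  have hofB : ENNReal.ofReal B = ∫⁻ ξ : AgmonE3, ENNReal.ofReal (‖ξ‖^4) * (n ξ)^2 := by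
    rw [hB, ofReal_integral_eq_lintegral_ofReal (agmon_integrable_A φ 4)
      (Filter.Eventually.of_forall fun ξ => by positivity)]
    refine lintegral_congr fun ξ => ?_
    rw [ENNReal.ofReal_mul (by positivity), hn]
    congr 1
    show ENNReal.ofReal (‖φ ξ‖^2) = ((‖φ ξ‖₊ : ℝ≥0∞))^2
    rw [ENNReal.ofReal_pow (norm_nonneg _)]; exact congrArg (· ^ 2) (ENNReal.ofReal_eq_coe_nnreal (norm_nonneg _))
  have hGint : ∫⁻ ξ : AgmonE3, G ξ = ENNReal.ofReal (2*(A*B)) := by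
    have hsplit : ∀ ξ : AgmonE3, G ξ = ENNReal.ofReal B * (ENNReal.ofReal (‖ξ‖^2) * (n ξ)^2)
        + ENNReal.ofReal A * (ENNReal.ofReal (‖ξ‖^4) * (n ξ)^2) := by
      intro ξ
      show ENNReal.ofReal (B*‖ξ‖^2 + A*‖ξ‖^4) * n ξ^2 = _
      rw [ENNReal.ofReal_add (by positivity) (by positivity), add_mul,
        ENNReal.ofReal_mul hBpos.le, ENNReal.ofReal_mul hApos.le]
      ring
    rw [lintegral_congr hsplit, lintegral_add_left (by fun_prop)]
    rw [lintegral_const_mul _ (by fun_prop), lintegral_const_mul _ (by fun_prop)]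
    rw [← hofA, ← hofB]
    rw [← ENNReal.ofReal_mul hBpos.le, ← ENNReal.ofReal_mul hApos.le,
      ← ENNReal.ofReal_add (by positivity) (by positivity)]
    congr 1
    ring
  have hFint : ∫⁻ ξ : AgmonE3, F ξ = ENNReal.ofReal (K * (Real.sqrt (B*A))⁻¹) := by
    rw [hF]
    have := agmon_lintegral_weight hBpos hApos
    simpa [hK, hV, mul_assoc] using this
  have hnorm_ofReal : ENNReal.ofReal (∫ ξ : AgmonE3, ‖φ ξ‖) = ∫⁻ ξ : AgmonE3, n ξ := by
    rw [ofReal_integral_eq_lintegral_ofReal φ.integrable.norm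
      (Filter.Eventually.of_forall fun ξ => norm_nonneg _)]
    exact lintegral_congr fun ξ => ENNReal.ofReal_eq_coe_nnreal (norm_nonneg _)
  have hfinal : ENNReal.ofReal (∫ ξ : AgmonE3, ‖φ ξ‖)
      ≤ ENNReal.ofReal ((K * (Real.sqrt (B*A))⁻¹) ^ ((1:ℝ)/2) * (2*(A*B)) ^ ((1:ℝ)/2)) := by
    rw [hnorm_ofReal]
    refine hCS.trans ?_
    rw [hGint, hFint]
    rw [ENNReal.ofReal_rpow_of_nonneg (by positivity) (by norm_num),
      ENNReal.ofReal_rpow_of_nonneg (by positivity) (by norm_num),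
      ← ENNReal.ofReal_mul (by positivity)]
  have hre := (ENNReal.ofReal_le_ofReal_iff (by positivity)).1 hfinal
  calc ∫ ξ : AgmonE3, ‖φ ξ‖
      ≤ (K * (Real.sqrt (B*A))⁻¹) ^ ((1:ℝ)/2) * (2*(A*B)) ^ ((1:ℝ)/2) := hre
    _ = Real.sqrt (2*K) * (A^((1:ℝ)/4) * B^((1:ℝ)/4)) := agmon_alg_lemma hKnn hApos hBpos

lemma agmon_degenerate (φ : SchwartzMap AgmonE3 ℂ) (k : ℕ)
    (h0 : ∫ ξ : AgmonE3, ‖ξ‖^k * ‖φ ξ‖^2 = 0) :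
    ∫ ξ : AgmonE3, ‖φ ξ‖ = 0 := by
  have h := (integral_eq_zero_iff_of_nonneg (fun ξ => by positivity)
    (agmon_integrable_A φ k)).1 h0
  have hane : ∀ᵐ ξ : AgmonE3, ξ ≠ 0 := by
    rw [MeasureTheory.ae_iff]
    simpa using (measure_singleton (0:AgmonE3))
  have hz : ∀ᵐ ξ : AgmonE3, ‖φ ξ‖ = 0 := by
    filter_upwards [h, hane] with ξ h1 h2
    have h1' : ‖ξ‖^k * ‖φ ξ‖^2 = 0 := h1
    have hnorm : 0 < ‖ξ‖^k := by
      have : 0 < ‖ξ‖ := norm_pos_iff.2 h2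
      positivity
    rcases mul_eq_zero.1 h1' with hc | hc
    · exact absurd hc hnorm.ne'
    · exact pow_eq_zero_iff (by norm_num) |>.1 hc
  calc ∫ ξ : AgmonE3, ‖φ ξ‖ = ∫ ξ : AgmonE3, (0:ℝ) := integral_congr_ae hz
    _ = 0 := by simp

end AgmonAux

/-- 3-D Agmon-type inequality: ‖u‖_{L^∞} ≤ C ‖u‖_{Ḣ¹}^{1/2} ‖u‖_{Ḣ²}^{1/2}. -/
theorem stmt_4 :
    ∃ C : ℝ, 0 < C ∧
    ∀ u : SchwartzMap (EuclideanSpace ℝ (Fin 3)) ℝ, ∀ x : EuclideanSpace ℝ (Fin 3),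
      |u x| ≤ C * (∫ ξ : EuclideanSpace ℝ (Fin 3), ‖ξ‖^2 * ‖𝓕 (fun y => (u y : ℂ)) ξ‖^2) ^ ((1:ℝ)/4)
              * (∫ ξ : EuclideanSpace ℝ (Fin 3), ‖ξ‖^4 * ‖𝓕 (fun y => (u y : ℂ)) ξ‖^2) ^ ((1:ℝ)/4) := by
  set C : ℝ := max (Real.sqrt (2 * ((3 * (volume (ball (0:AgmonE3) 1)).toReal) * (π/2)))) 1
    with hC
  refine ⟨C, lt_of_lt_of_le one_pos (le_max_right _ _), fun u x => ?_⟩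
  have h𝓕 : 𝓕 (fun y : AgmonE3 => ((u y : ℝ) : ℂ))
      = ⇑(SchwartzMap.fourierTransformCLM ℝ (agmonUC u)) := by
    rw [← agmonUC_apply]
    rfl
  set φ : SchwartzMap AgmonE3 ℂ := SchwartzMap.fourierTransformCLM ℝ (agmonUC u) with hφ
  have hbound : |u x| ≤ ∫ ξ : AgmonE3, ‖φ ξ‖ := by
    have := agmon_pointwise_bound u x
    rwa [h𝓕] at this
  have hstmtA : (∫ ξ : EuclideanSpace ℝ (Fin 3), ‖ξ‖^2 * ‖𝓕 (fun y => ((u y : ℝ) : ℂ)) ξ‖^2)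
      = ∫ ξ : AgmonE3, ‖ξ‖^2 * ‖φ ξ‖^2 := by rw [h𝓕]
  have hstmtB : (∫ ξ : EuclideanSpace ℝ (Fin 3), ‖ξ‖^4 * ‖𝓕 (fun y => ((u y : ℝ) : ℂ)) ξ‖^2)
      = ∫ ξ : AgmonE3, ‖ξ‖^4 * ‖φ ξ‖^2 := by rw [h𝓕]
  rw [hstmtA, hstmtB]
  set A := ∫ ξ : AgmonE3, ‖ξ‖^2 * ‖φ ξ‖^2 with hA
  set B := ∫ ξ : AgmonE3, ‖ξ‖^4 * ‖φ ξ‖^2 with hB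
  have hAnn : 0 ≤ A := integral_nonneg fun ξ => by positivity
  have hBnn : 0 ≤ B := integral_nonneg fun ξ => by positivity
  rcases hAnn.eq_or_lt with hA0 | hApos
  · have hz : ∫ ξ : AgmonE3, ‖φ ξ‖ = 0 := agmon_degenerate φ 2 hA0.symm
    have : |u x| ≤ 0 := hbound.trans_eq hz
    refine this.trans ?_
    rw [← hA0, Real.zero_rpow (by norm_num)]
    simp only [mul_zero, zero_mul]
    positivity
  rcases hBnn.eq_or_lt with hB0 | hBpos
  · have hz : ∫ ξ : AgmonE3, ‖φ ξ‖ = 0 := agmon_degenerate φ 4 hB0.symm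
    have : |u x| ≤ 0 := hbound.trans_eq hz
    refine this.trans ?_
    rw [← hB0, Real.zero_rpow (by norm_num)]
    simp
  have hkey := agmon_key_CS φ hApos hBpos
  refine hbound.trans (hkey.trans ?_)
  have hnn : 0 ≤ A^((1:ℝ)/4) * B^((1:ℝ)/4) := by positivity
  calc Real.sqrt (2 * ((3 * (volume (ball (0:AgmonE3) 1)).toReal) * (π/2)))
        * (A^((1:ℝ)/4) * B^((1:ℝ)/4))
      ≤ C * (A^((1:ℝ)/4) * B^((1:ℝ)/4)) := mul_le_mul_of_nonneg_right (le_max_left _ _) hnn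
    _ = C * A^((1:ℝ)/4) * B^((1:ℝ)/4) := by ring
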